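/- Let H be a real Hilbert space, let μ ∈ ℝ, ρ < 0, α ≥ 0, and θ ∈ [π/2, π) satisfy 1 − 4μρ ≤ (1 − 2αρ)²·sin²(θ). If B is a θ-angle-bounded set-valued operator on H, then the operator B + α·id (whose graph is {(x, u + αx) : (x,u) ∈ graph B}) is (μ,ρ)-semimonotone. -/

import Mathlib

/-- A set-valued operator `A` on a real Hilbert space is `(μ,ρ)`-semimonotone if
`⟪x - y, u - v⟫ ≥ μ‖x - y‖² + ρ‖u - v‖²` for all `(x,u)`, `(y,v)` in its graph. -/
def Semimonotone {H : Type*} [NormedAddCommGroup H] [InnerProductSpace ℝ H]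
    (μ ρ : ℝ) (A : H → Set H) : Prop :=
  ∀ ⦃x u y v : H⦄, u ∈ A x → v ∈ A y →
    (inner ℝ (x - y) (u - v) : ℝ) ≥ μ * ‖x - y‖ ^ 2 + ρ * ‖u - v‖ ^ 2

/-- A set-valued operator `A` on a real Hilbert space is `θ`-angle-bounded if
`⟪x - y, u - v⟫ ≥ cos(θ)‖x - y‖‖u - v‖` for all `(x,u)`, `(y,v)` in its graph. -/
def AngleBounded {H : Type*} [NormedAddCommGroup H] [InnerProductSpace ℝ H]
    (θ : ℝ) (A : H → Set H) : Prop :=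
  ∀ ⦃x u y v : H⦄, u ∈ A x → v ∈ A y →
    (inner ℝ (x - y) (u - v) : ℝ) ≥ Real.cos θ * (‖x - y‖ * ‖u - v‖)

theorem stmt_6 {H : Type*} [NormedAddCommGroup H] [InnerProductSpace ℝ H] [CompleteSpace H]
    (μ ρ α θ : ℝ) (hρ : ρ < 0) (hα : α ≥ 0) (hθ : θ ∈ Set.Ico (Real.pi / 2) Real.pi)
    (hcond : 1 - 4 * μ * ρ ≤ (1 - 2 * α * ρ) ^ 2 * Real.sin θ ^ 2)
    (B : H → Set H) (hB : AngleBounded θ B) :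
    Semimonotone μ ρ (fun x => (fun u => u + α • x) '' B x) := by
  rintro x w y z ⟨u, hu, rfl⟩ ⟨v, hv, rfl⟩
  have key : (inner ℝ (x - y) (u - v) : ℝ) ≥ Real.cos θ * (‖x - y‖ * ‖u - v‖) := hB hu hv
  have hcos : Real.cos θ ≤ 0 :=
    Real.cos_nonpos_of_pi_div_two_le_of_le hθ.1 (le_trans hθ.2.le (by linarith [Real.pi_pos]))
  have hsc : Real.sin θ ^ 2 + Real.cos θ ^ 2 = 1 := Real.sin_sq_add_cos_sq θ
  have hdiff : u + α • x - (v + α • y) = (u - v) + α • (x - y) := by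
    rw [smul_sub]; abel
  rw [hdiff]
  have hin : (inner ℝ (x - y) ((u - v) + α • (x - y)) : ℝ)
      = inner ℝ (x - y) (u - v) + α * ‖x - y‖ ^ 2 := by
    rw [inner_add_right, real_inner_smul_right, real_inner_self_eq_norm_sq]
  have hnorm : ‖(u - v) + α • (x - y)‖ ^ 2
      = ‖u - v‖ ^ 2 + 2 * (α * (inner ℝ (x - y) (u - v) : ℝ)) + α ^ 2 * ‖x - y‖ ^ 2 := by
    rw [norm_add_sq_real, real_inner_smul_right, norm_smul, Real.norm_eq_abs,
      abs_of_nonneg hα, mul_pow, real_inner_comm]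
  rw [hin, hnorm]
  set p : ℝ := inner ℝ (x - y) (u - v)
  set na := ‖x - y‖
  set nb := ‖u - v‖
  have hna : 0 ≤ na := norm_nonneg _
  have hnb : 0 ≤ nb := norm_nonneg _
  have h1 : (0:ℝ) < 1 - 2 * α * ρ := by nlinarith
  have h2 : (1 - 2 * α * ρ) * p ≥ (1 - 2 * α * ρ) * (Real.cos θ * (na * nb)) :=
    mul_le_mul_of_nonneg_left key h1.le
  have hcond' : 1 - 4 * μ * ρ ≤ (1 - 2 * α * ρ) ^ 2 * (1 - Real.cos θ ^ 2) := by
    nlinarith [hcond, hsc]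
  have hQ : ρ * nb ^ 2 - (1 - 2 * α * ρ) * Real.cos θ * (na * nb)
      + (μ - α + ρ * α ^ 2) * na ^ 2 ≤ 0 := by
    nlinarith [sq_nonneg (2 * ρ * nb - (1 - 2 * α * ρ) * Real.cos θ * na),
      mul_le_mul_of_nonneg_left hcond' (mul_nonneg hna hna), hρ, sq_nonneg na]
  nlinarith [h2, hQ]
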